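/- Let α > 1 and κ > 0 and let X be Pareto II (Lomax) distributed, i.e. with cumulative distribution function F(x) = 1 − (κ/(κ+x))^α for x ≥ 0. Then E[X] = κ/(α−1), D_X = {p ∈ (0,1) : p > 1 − ((α−1)/α)^α}, and for every p ∈ D_X the θ-index is θ_p(X) = (1−p)/((α−1) − α·(1−p)^{1/α}). -/

import Mathlib

open MeasureTheory Set


lemma lomaxA {α κ p : ℝ} (hα : 1 < α) (hκ : 0 < κ) (hp : p ∈ Ioo (0:ℝ) 1) :
    {x : ℝ | p ≤ (if 0 ≤ x then 1 - (κ/(κ+x))^α else 0)} =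
      Ici (κ * ((1-p) ^ (-α⁻¹) - 1)) := by
  obtain ⟨hp0, hp1⟩ := hp
  have hα0 : 0 < α := lt_trans one_pos hα
  have hq0 : 0 < 1 - p := by linarith
  have hs0 : 0 < (1-p) ^ (α⁻¹) := Real.rpow_pos_of_pos hq0 _
  have hsneg : (1-p) ^ (-α⁻¹) = ((1-p) ^ (α⁻¹))⁻¹ := Real.rpow_neg hq0.le _
  set s := (1-p) ^ (α⁻¹) with hs
  have hs1 : s < 1 := by
    rw [hs]
    exact Real.rpow_lt_one hq0.le (by linarith) (by positivity)
  have hQ : κ * ((1-p) ^ (-α⁻¹) - 1) = κ / s - κ := by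
    rw [hsneg]; field_simp
  rw [hQ]
  have hQpos : 0 < κ / s - κ := by
    have : κ < κ / s := by
      rw [lt_div_iff₀ hs0]; nlinarith
    linarith
  ext x
  simp only [mem_setOf_eq, mem_Ici]
  by_cases hx : 0 ≤ x
  · rw [if_pos hx]
    have hκx : 0 < κ + x := by linarith
    have h1 : p ≤ 1 - (κ/(κ+x))^α ↔ (κ/(κ+x))^α ≤ 1 - p := by constructor <;> intro h <;> linarith
    rw [h1]
    have h2 : (κ/(κ+x))^α ≤ 1 - p ↔ κ/(κ+x) ≤ s := by
      rw [hs, ← Real.le_rpow_inv_iff_of_pos (by positivity) hq0.le hα0]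
    rw [h2, div_le_iff₀ hκx]
    constructor
    · intro h
      have h3 : κ / s ≤ κ + x := (div_le_iff₀ hs0).mpr (by linarith [mul_comm s (κ+x)])
      linarith
    · intro h
      have h3 : κ / s ≤ κ + x := by linarith
      linarith [(div_le_iff₀ hs0).mp h3, mul_comm s (κ+x)]
  · rw [if_neg hx]
    push_neg at hx
    constructor
    · intro h; linarith
    · intro h; linarith

lemma lomaxB {Ω : Type*} [MeasurableSpace Ω] (μ : Measure Ω) [IsProbabilityMeasure μ]
    (X : Ω → ℝ) (hX : Integrable X μ)
    {α κ : ℝ} (hα : 1 < α) (hκ : 0 < κ)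
    (hFlomax : ∀ x : ℝ, (μ {ω | X ω ≤ x}).toReal = if 0 ≤ x then 1 - (κ / (κ + x)) ^ α else 0) :
    (∫ ω, X ω ∂μ) = κ / (α - 1) := by
  have hα0 : 0 < α := lt_trans one_pos hα
  have hneg : ∀ x : ℝ, x < 0 → μ {ω | X ω ≤ x} = 0 := by
    intro x hx
    have h1 := hFlomax x
    rw [if_neg (not_le.mpr hx)] at h1
    have hfin : μ {ω | X ω ≤ x} ≠ ⊤ := (measure_lt_top μ _).ne
    exact (ENNReal.toReal_eq_zero_iff _).mp h1 |>.resolve_right hfin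
  have hXnn : 0 ≤ᵐ[μ] X := by
    have hsub : {ω | X ω < 0} ⊆ ⋃ n : ℕ, {ω | X ω ≤ -(1/(n+1))} := by
      intro ω hω
      simp only [mem_setOf_eq] at hω
      obtain ⟨n, hn⟩ := exists_nat_one_div_lt (by linarith : (0:ℝ) < -X ω)
      exact mem_iUnion.mpr ⟨n, by simp only [mem_setOf_eq]; push_cast; linarith⟩
    have h0 : μ {ω | X ω < 0} = 0 := by
      refine measure_mono_null hsub (measure_iUnion_null fun n => hneg _ ?_)
      have : (0:ℝ) < 1/(n+1) := by positivity
      linarith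
    filter_upwards [measure_eq_zero_iff_ae_notMem.mp h0] with ω hω
    simpa [not_lt] using hω
  rw [hX.integral_eq_integral_meas_lt hXnn]
  have htail : ∀ t ∈ Ioi (0:ℝ),
      (μ {a | t < X a}).toReal = κ ^ α * (κ + t) ^ (-α) := by
    intro t ht
    have ht0 : (0:ℝ) < t := ht
    have hcompl : {a | t < X a} = {a | X a ≤ t}ᶜ := by
      ext a; simp [not_le]
    have hnm : NullMeasurableSet {a | X a ≤ t} μ :=
      nullMeasurableSet_le hX.aemeasurable aemeasurable_const
    have hle : μ {a | X a ≤ t} ≤ 1 := prob_le_one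
    rw [hcompl, measure_compl₀ hnm (measure_lt_top μ _).ne, measure_univ,
      ENNReal.toReal_sub_of_le hle (by simp), ENNReal.toReal_one, hFlomax t,
      if_pos ht0.le]
    have hkt : 0 < κ + t := by linarith
    rw [Real.div_rpow hκ.le hkt.le, Real.rpow_neg hkt.le]
    ring
  simp only [measureReal_def]
  rw [setIntegral_congr_fun measurableSet_Ioi htail, MeasureTheory.integral_const_mul]
  have hcov : ∫ t in Ioi (0:ℝ), (κ + t) ^ (-α) = ∫ s in Ioi κ, s ^ (-α) := by
    have hpre : Ioi (0:ℝ) = (· + κ) ⁻¹' (Ioi κ) := by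
      ext t; simp [mem_Ioi]
    rw [hpre]
    rw [← (measurePreserving_add_right volume κ).setIntegral_preimage_emb
      (MeasurableEquiv.addRight κ).measurableEmbedding (fun s => s ^ (-α)) (Ioi κ)]
    simp_rw [add_comm κ]
  rw [hcov, integral_Ioi_rpow_of_lt (by linarith) hκ]
  have hpow : κ ^ α * κ ^ (-α + 1) = κ := by
    rw [← Real.rpow_add hκ]; norm_num
  have hring : κ ^ α * (-κ ^ (-α + 1) / (-α + 1)) = κ ^ α * κ ^ (-α + 1) / (α - 1) := by
    rw [show (-α+1) = -(α-1) by ring, neg_div_neg_eq, mul_div_assoc]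
  rw [hring, hpow]

lemma lomaxC {α κ p : ℝ} (hα : 1 < α) (hκ : 0 < κ) (hp : p ∈ Ioo (0:ℝ) 1) :
    ∫ u in p..1, κ * ((1-u) ^ (-α⁻¹) - 1)
      = κ * ((1-p) ^ (1-α⁻¹) * (α/(α-1)) - (1-p)) := by
  obtain ⟨hp0, hp1⟩ := hp
  have hα0 : 0 < α := lt_trans one_pos hα
  have hq0 : 0 < 1 - p := by linarith
  have hinv : α⁻¹ < 1 := by
    rw [inv_lt_one_iff₀]; right; exact hα
  have he : (-1:ℝ) < -α⁻¹ := by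
    have : 0 < α⁻¹ := by positivity
    linarith
  have hii : IntervalIntegrable (fun u => (1-u) ^ (-α⁻¹)) volume p 1 := by
    have h := (intervalIntegral.intervalIntegrable_rpow' he (a := 1-p) (b := 1-1)).comp_sub_left 1
    simpa using h
  rw [intervalIntegral.integral_const_mul, intervalIntegral.integral_sub hii intervalIntegrable_const,
    intervalIntegral.integral_const, smul_eq_mul, mul_one]
  have hmain : ∫ u in p..1, (1-u) ^ (-α⁻¹) = (1-p) ^ (1-α⁻¹) * (α/(α-1)) := by
    have h1 := intervalIntegral.integral_comp_sub_left (a := p) (b := 1)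
      (fun x => x ^ (-α⁻¹)) 1
    simp only [sub_self] at h1
    rw [h1, integral_rpow (Or.inl he), Real.zero_rpow (by linarith : -α⁻¹ + 1 ≠ 0)]
    rw [show -α⁻¹ + 1 = 1 - α⁻¹ by ring]
    rw [div_eq_mul_inv, show (1 - α⁻¹)⁻¹ = α/(α-1) by
      rw [show 1 - α⁻¹ = (α-1)/α by field_simp, inv_div]]
    ring
  rw [hmain]

/-- Let `X` be Pareto II (Lomax) distributed with shape `α > 1` and
scale `κ > 0`, i.e. with CDF `F x = 1 - (κ/(κ+x))^α` for `x ≥ 0` (and `F x = 0`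
for `x < 0`). Then `E[X] = κ/(α-1)`,
`D_X = {p ∈ (0,1) : VaR_p(X) > E[X]} = {p ∈ (0,1) : p > 1 - ((α-1)/α)^α}`, and for
every `p ∈ D_X` the θ-index is `θ_p(X) = (1-p)/((α-1) - α·(1-p)^{1/α})`. -/
theorem lomax_theta_index
    {Ω : Type*} [MeasurableSpace Ω] (μ : Measure Ω) [IsProbabilityMeasure μ]
    (X : Ω → ℝ) (hX : Integrable X μ)
    (α κ : ℝ) (hα : 1 < α) (hκ : 0 < κ)
    (F : ℝ → ℝ) (hF : ∀ x, F x = (μ {ω | X ω ≤ x}).toReal)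
    (hFlomax : ∀ x : ℝ, F x = if 0 ≤ x then 1 - (κ / (κ + x)) ^ α else 0)
    (VaR : ℝ → ℝ) (hVaR : ∀ p, VaR p = sInf {x | p ≤ F x})
    (ES : ℝ → ℝ) (hES : ∀ p ∈ Set.Ioo (0:ℝ) 1, ES p = (1 - p)⁻¹ * ∫ u in p..1, VaR u) :
    (∫ ω, X ω ∂μ) = κ / (α - 1)
    ∧ {p ∈ Set.Ioo (0:ℝ) 1 | (∫ ω, X ω ∂μ) < VaR p}
        = {p ∈ Set.Ioo (0:ℝ) 1 | 1 - ((α - 1) / α) ^ α < p}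
    ∧ ∀ p ∈ Set.Ioo (0:ℝ) 1, 1 - ((α - 1) / α) ^ α < p →
        (1 - p) * (ES p - VaR p) / (VaR p - ∫ ω, X ω ∂μ)
          = (1 - p) / ((α - 1) - α * (1 - p) ^ (1 / α)) := by
  have hα0 : 0 < α := lt_trans one_pos hα
  have hα1 : 0 < α - 1 := by linarith
  have hmean : (∫ ω, X ω ∂μ) = κ / (α - 1) :=
    lomaxB μ X hX hα hκ (fun x => (hF x).symm.trans (hFlomax x))
  -- VaR formula
  have hVaRval : ∀ p ∈ Ioo (0:ℝ) 1, VaR p = κ * ((1-p) ^ (-α⁻¹) - 1) := by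
    intro p hp
    rw [hVaR]
    have hset : {x | p ≤ F x} = Ici (κ * ((1-p) ^ (-α⁻¹) - 1)) := by
      simp only [hFlomax]
      exact lomaxA hα hκ hp
    rw [hset, csInf_Ici]
  -- the D_X characterization
  have hD : ∀ p ∈ Ioo (0:ℝ) 1,
      (κ / (α - 1) < VaR p ↔ 1 - ((α - 1) / α) ^ α < p) := by
    intro p hp
    obtain ⟨hp0, hp1⟩ := hp
    have hq0 : 0 < 1 - p := by linarith
    have hs0 : 0 < (1-p) ^ (α⁻¹) := Real.rpow_pos_of_pos hq0 _
    set s := (1-p) ^ (α⁻¹) with hs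
    have hVv : VaR p = κ * (1 - s) / s := by
      rw [hVaRval p ⟨hp0, hp1⟩, Real.rpow_neg hq0.le, ← hs]
      field_simp
    have hkey : α * s < α - 1 ↔ 1 - ((α - 1) / α) ^ α < p := by
      have hsα : s ^ α = 1 - p := Real.rpow_inv_rpow hq0.le (ne_of_gt hα0)
      have hiff : s < (α-1)/α ↔ s ^ α < ((α-1)/α) ^ α :=
        (Real.rpow_lt_rpow_iff hs0.le (by positivity) hα0).symm
      rw [hsα] at hiff
      constructor
      · intro h
        have h1 : s < (α-1)/α := by rw [lt_div_iff₀ hα0]; linarith [mul_comm s α]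
        have := hiff.mp h1
        linarith
      · intro h
        have h1 : s < (α-1)/α := hiff.mpr (by linarith)
        rw [lt_div_iff₀ hα0] at h1
        linarith [mul_comm s α]
    rw [hVv, ← hkey, div_lt_div_iff₀ hα1 hs0]
    constructor
    · intro h; nlinarith
    · intro h; nlinarith
  refine ⟨hmean, ?_, ?_⟩
  · ext p
    simp only [mem_setOf_eq]
    constructor
    · rintro ⟨h1, h2⟩
      rw [hmean] at h2
      exact ⟨h1, (hD p h1).mp h2⟩
    · rintro ⟨h1, h2⟩
      rw [hmean]
      exact ⟨h1, (hD p h1).mpr h2⟩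
  · intro p hp hcond
    obtain ⟨hp0, hp1⟩ := hp
    have hq0 : 0 < 1 - p := by linarith
    have hs0 : 0 < (1-p) ^ (α⁻¹) := Real.rpow_pos_of_pos hq0 _
    set s := (1-p) ^ (α⁻¹) with hs
    -- positivity of denominator factor
    have hden : α * s < α - 1 := by
      have hsα : s ^ α = 1 - p := Real.rpow_inv_rpow hq0.le (ne_of_gt hα0)
      have hiff : s < (α-1)/α ↔ s ^ α < ((α-1)/α) ^ α :=
        (Real.rpow_lt_rpow_iff hs0.le (by positivity) hα0).symm
      rw [hsα] at hiff
      have h1 : s < (α-1)/α := hiff.mpr (by linarith)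
      rw [lt_div_iff₀ hα0] at h1
      linarith [mul_comm s α]
    have hVv : VaR p = κ * ((1-p) ^ (-α⁻¹) - 1) := hVaRval p ⟨hp0, hp1⟩
    have hVv' : VaR p = κ * (s⁻¹ - 1) := by
      rw [hVv, Real.rpow_neg hq0.le, ← hs]
    -- ES value
    have hESint : (∫ u in p..1, VaR u) = ∫ u in p..1, κ * ((1-u) ^ (-α⁻¹) - 1) := by
      apply intervalIntegral.integral_congr_ae
      have h1 : ∀ᵐ x : ℝ ∂volume, x ≠ 1 := by
        rw [ae_iff]
        have : {x : ℝ | ¬ x ≠ 1} = {1} := by ext x; simp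
        rw [this]
        exact Real.volume_singleton
      filter_upwards [h1] with x hx hxI
      rw [Set.uIoc_of_le hp1.le] at hxI
      exact hVaRval x ⟨by linarith [hxI.1], lt_of_le_of_ne hxI.2 hx⟩
    have hESval : ES p = (1-p)⁻¹ * (κ * ((1-p) ^ (1-α⁻¹) * (α/(α-1)) - (1-p))) := by
      rw [hES p ⟨hp0, hp1⟩, hESint, lomaxC hα hκ ⟨hp0, hp1⟩]
    have hqpow : (1-p) ^ (1-α⁻¹) = (1-p) * s⁻¹ := by
      rw [Real.rpow_sub hq0, Real.rpow_one, ← hs, div_eq_mul_inv]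
    -- denominator nonzero
    have hdpos : 0 < VaR p - ∫ ω, X ω ∂μ := by
      rw [hmean]
      have := (hD p ⟨hp0, hp1⟩).mpr hcond
      linarith
    have hDpos : 0 < (α - 1) - α * (1-p) ^ (1/α) := by
      rw [one_div, ← hs]; linarith
    rw [div_eq_div_iff hdpos.ne' hDpos.ne']
    rw [hmean, hVv', hESval, hqpow, one_div, ← hs]
    field_simp
    ring
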